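/- Consider the deep network H₁ = W₀X, X_k = φ(H_k), H_{k+1} = W_k X_k (k = 1,…,L). Suppose: (i) φ : ℝ → ℝ is strictly monotonic and surjective onto ℝ; (ii) rank(X) = m; (iii) n_k > n_{k+1} for all k ∈ {1,…,L}. Then for every target matrix H̃ ∈ ℝ^{n_{L+1}×m} and all weight matrices W₁,…,W_L of full row rank (rank(W_k) = n_{k+1}), there exists W₀ ∈ ℝ^{n₁×n₀} such that the network output satisfies H_{L+1}(W₀, W₁,…,W_L) = H̃. -/
import Mathlib


/-- A matrix with full row rank is surjective as a left-multiplication on matrices. -/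
lemma full_row_rank_mul_surj {a b m : ℕ} (M : Matrix (Fin a) (Fin b) ℝ)
    (h : M.rank = a) (T : Matrix (Fin a) (Fin m) ℝ) :
    ∃ V : Matrix (Fin b) (Fin m) ℝ, M * V = T := by
  have hsurj : Function.Surjective M.mulVecLin := by
    rw [← LinearMap.range_eq_top]
    apply Submodule.eq_top_of_finrank_eq
    simpa [Matrix.rank] using h
  choose f hf using hsurj
  refine ⟨Matrix.of (fun i j => f (fun r => T r j) i), ?_⟩
  ext i j
  have := congrFun (hf (fun r => T r j)) i
  simpa [Matrix.mul_apply, Matrix.mulVecLin, Matrix.mulVec, dotProduct] using this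

/-- Pre-activations of the network `H₁ = W₀ X`, `X_k = φ(H_k)`, `H_{k+1} = W_k X_k`:
`preAct … k` is the matrix `H_{k+1}` (so `preAct … 0 = H₁` and `preAct … L = H_{L+1}`). -/
noncomputable def preAct (φ : ℝ → ℝ) (d : ℕ → ℕ) {m : ℕ}
    (X : Matrix (Fin (d 0)) (Fin m) ℝ)
    (W₀ : Fin (d 1) → Fin (d 0) → ℝ)
    (W : (k : ℕ) → Fin (d (k + 1)) → Fin (d k) → ℝ) :
    (k : ℕ) → Matrix (Fin (d (k + 1))) (Fin m) ℝ
  | 0 => Matrix.of W₀ * X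
  | (k + 1) => Matrix.of (W (k + 1)) * ((preAct φ d X W₀ W k).map φ)

/-- Lemma (recovering `W₀`): if `φ` is a strictly monotone surjection of `ℝ`,
`rank X = m`, and the widths satisfy `n_k > n_{k+1}` for `k = 1,…,L`, then for every
target output `H̃ ∈ ℝ^{n_{L+1}×m}` and all full-row-rank weights `W₁,…,W_L` there is a
first-layer weight matrix `W₀` with network output `H_{L+1}(W₀, W₁,…,W_L) = H̃`. -/
theorem recovering_first_layer
    (m L : ℕ) (d : ℕ → ℕ)
    (φ : ℝ → ℝ) (hmono : StrictMono φ ∨ StrictAnti φ) (hsurj : Function.Surjective φ)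
    (X : Matrix (Fin (d 0)) (Fin m) ℝ) (hX : X.rank = m)
    (hwidth : ∀ k, 1 ≤ k → k ≤ L → d (k + 1) < d k)
    (H' : Matrix (Fin (d (L + 1))) (Fin m) ℝ)
    (W : (k : ℕ) → Fin (d (k + 1)) → Fin (d k) → ℝ)
    (hfull : ∀ k, 1 ≤ k → k ≤ L → (Matrix.of (W k)).rank = d (k + 1)) :
    ∃ W₀ : Fin (d 1) → Fin (d 0) → ℝ, preAct φ d X W₀ W L = H' := by
  clear hmono
  induction L with
  | zero =>
    have hXT : X.transpose.rank = m := by rw [Matrix.rank_transpose]; exact hX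
    obtain ⟨V, hV⟩ := full_row_rank_mul_surj X.transpose hXT H'.transpose
    refine ⟨V.transpose, ?_⟩
    show Matrix.of V.transpose * X = H'
    have := congrArg Matrix.transpose hV
    rwa [Matrix.transpose_mul, Matrix.transpose_transpose, Matrix.transpose_transpose] at this
  | succ L ih =>
    obtain ⟨T, hT⟩ := full_row_rank_mul_surj (Matrix.of (W (L + 1)))
      (hfull (L + 1) (by omega) le_rfl) H'
    have hrec : ∃ S : Matrix (Fin (d (L + 1))) (Fin m) ℝ, S.map φ = T := by
      refine ⟨T.map (Function.invFun φ), ?_⟩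
      ext i j
      simp [Matrix.map_apply, Function.invFun_eq (hsurj _)]
    obtain ⟨S, hS⟩ := hrec
    obtain ⟨W₀, hW₀⟩ := ih (fun k h1 h2 => hwidth k h1 (by omega)) S
      (fun k h1 h2 => hfull k h1 (by omega))
    refine ⟨W₀, ?_⟩
    rw [preAct, hW₀, hS]
    exact hT
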